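/- There is no L(1,2)-edge labeling of the infinite octagonal grid T8 with labels in {0,…,26}; that is, the span λ'_{1,2}(T8) of L(1,2)-edge labeling of T8 is at least 27. -/

import Mathlib

/-- The infinite octagonal grid (king graph on `ℤ × ℤ`): distinct vertices are
adjacent iff their Chebyshev distance is `1`. -/
def T8 : SimpleGraph (ℤ × ℤ) where
  Adj u v := u ≠ v ∧ max |u.1 - v.1| |u.2 - v.2| = 1
  symm := by
    constructor
    rintro u v ⟨h1, h2⟩
    refine ⟨h1.symm, ?_⟩
    rw [abs_sub_comm v.1 u.1, abs_sub_comm v.2 u.2]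
    exact h2
  loopless := by constructor; rintro u ⟨h, -⟩; exact h rfl
/-- Two (unordered pairs regarded as) edges share an endpoint. -/
def SharesEndpoint (e1 e2 : Sym2 (ℤ × ℤ)) : Prop := ∃ v, v ∈ e1 ∧ v ∈ e2

/-- Two edges of `T8` are at distance `1`: distinct and sharing an endpoint. -/
def EdgeDist1 (e1 e2 : Sym2 (ℤ × ℤ)) : Prop := e1 ≠ e2 ∧ SharesEndpoint e1 e2

/-- Two edges of `T8` are at distance `2`: distinct, sharing no endpoint, but some
edge of `T8` shares an endpoint with both. -/
def EdgeDist2 (e1 e2 : Sym2 (ℤ × ℤ)) : Prop :=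
  e1 ≠ e2 ∧ ¬ SharesEndpoint e1 e2 ∧
    ∃ e3 ∈ T8.edgeSet, SharesEndpoint e1 e3 ∧ SharesEndpoint e3 e2

/-- `f` is an `L(1,2)`-edge labeling of `T8`: edges at distance `1` get distinct
labels and edges at distance `2` get labels differing by at least `2`. -/
def IsL12 (f : Sym2 (ℤ × ℤ) → ℕ) : Prop :=
  (∀ e1 ∈ T8.edgeSet, ∀ e2 ∈ T8.edgeSet, EdgeDist1 e1 e2 → f e1 ≠ f e2) ∧
  (∀ e1 ∈ T8.edgeSet, ∀ e2 ∈ T8.edgeSet, EdgeDist2 e1 e2 → 2 ≤ |(f e1 : ℤ) - (f e2 : ℤ)|)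

/-- An `L(1,2)`-edge labeling of `T8` with labels in `{0, …, n}`. -/
def IsL12Bounded (n : ℕ) (f : Sym2 (ℤ × ℤ) → ℕ) : Prop :=
  IsL12 f ∧ ∀ e ∈ T8.edgeSet, f e ≤ n

/-- The unit square `S(a,b)`. -/
def unitSquare (a b : ℤ) : Set (ℤ × ℤ) :=
  {(a, b), (a + 1, b), (a, b + 1), (a + 1, b + 1)}

/-- `GS S`: the set of edges of `T8` incident to at least one vertex of `S`. -/
def GS (S : Set (ℤ × ℤ)) : Set (Sym2 (ℤ × ℤ)) :=
  {e | e ∈ T8.edgeSet ∧ ∃ v ∈ S, v ∈ e}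

/-- `Sprime a b`: vertices at Chebyshev distance at most `2` from some vertex of
`S(a,b)` (that is, `S ∪ N(S) ∪ N(N(S))`). -/
def Sprime (a b : ℤ) : Set (ℤ × ℤ) :=
  {u | ∃ v ∈ unitSquare a b, max |u.1 - v.1| |u.2 - v.2| ≤ 2}

/-- Two edges sharing an endpoint `v`, written `e1 = {v, v+d1}` and `e2 = {v, v+d2}`,
are at angle `45°` if exactly one of `d1, d2` has both coordinates nonzero and
`d1 · d2 = 1`. -/
def Angle45 (e1 e2 : Sym2 (ℤ × ℤ)) : Prop :=
  ∃ v d1 d2 : ℤ × ℤ, e1 = s(v, v + d1) ∧ e2 = s(v, v + d2) ∧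
    Xor' (d1.1 ≠ 0 ∧ d1.2 ≠ 0) (d2.1 ≠ 0 ∧ d2.2 ≠ 0) ∧
    d1.1 * d2.1 + d1.2 * d2.2 = 1

/-- An edge is slanting if its endpoints differ in both coordinates. -/
def Slanting (e : Sym2 (ℤ × ℤ)) : Prop :=
  ∃ u v : ℤ × ℤ, e = s(u, v) ∧ u.1 ≠ v.1 ∧ u.2 ≠ v.2

/-- `e, e', e''` form the edge set of a triangle of `T8`. -/
def TriangleEdgeSet (e e' e'' : Sym2 (ℤ × ℤ)) : Prop :=
  ∃ u v w : ℤ × ℤ, T8.Adj u v ∧ T8.Adj v w ∧ T8.Adj u w ∧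
    ({e, e', e''} : Set (Sym2 (ℤ × ℤ))) = {s(u, v), s(v, w), s(u, w)}

/-- A triangle of `T8`: three pairwise adjacent vertices. -/
def IsTriangle (t : Finset (ℤ × ℤ)) : Prop :=
  t.card = 3 ∧ ∀ u ∈ t, ∀ v ∈ t, u ≠ v → T8.Adj u v

/-- The edges of a triangle. -/
def triangleEdges (t : Finset (ℤ × ℤ)) : Set (Sym2 (ℤ × ℤ)) :=
  {e | ∃ u ∈ t, ∃ v ∈ t, u ≠ v ∧ e = s(u, v)}

/-! ### Auxiliary development for the proof -/

namespace NoL12Aux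

abbrev Pt := ℤ × ℤ

def dirv : Fin 4 → Pt
  | 0 => (1, 0)
  | 1 => (0, 1)
  | 2 => (1, 1)
  | 3 => (1, -1)

/-- The edge with base point `p.1` in direction `p.2`. -/
def EdP (p : Pt × Fin 4) : Sym2 Pt := s(p.1, p.1 + dirv p.2)

lemma mem_EdP {x : Pt} {p : Pt × Fin 4} : x ∈ EdP p ↔ x = p.1 ∨ x = p.1 + dirv p.2 :=
  Sym2.mem_iff

lemma dirv_max (i : Fin 4) : max |(dirv i).1| |(dirv i).2| = 1 := by fin_cases i <;> decide

lemma dirv_ne (i : Fin 4) : dirv i ≠ 0 := by fin_cases i <;> decide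

lemma dirv_injective : Function.Injective dirv := by decide

lemma dirv_add_ne : ∀ i j : Fin 4, dirv i + dirv j ≠ 0 := by decide

lemma adj_shift (v : Pt) (i : Fin 4) : T8.Adj v (v + dirv i) := by
  constructor
  · intro h
    apply dirv_ne i
    have h2 := congrArg (fun w => w - v) h
    simpa using h2.symm
  · have h1 : v.1 - (v + dirv i).1 = -(dirv i).1 := by simp [Prod.fst_add]
    have h2 : v.2 - (v + dirv i).2 = -(dirv i).2 := by simp [Prod.snd_add]
    rw [h1, h2, abs_neg, abs_neg, dirv_max]

lemma EdP_mem_edgeSet (p : Pt × Fin 4) : EdP p ∈ T8.edgeSet := by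
  rw [EdP, SimpleGraph.mem_edgeSet]
  exact adj_shift p.1 p.2

lemma EdP_inj {p q : Pt × Fin 4} (h : EdP p = EdP q) : p = q := by
  rw [EdP, EdP, Sym2.eq_iff] at h
  rcases h with ⟨h1, h2⟩ | ⟨h1, h2⟩
  · rw [h1] at h2
    exact Prod.ext_iff.mpr ⟨h1, dirv_injective (add_left_cancel h2)⟩
  · exfalso
    apply dirv_add_ne p.2 q.2
    have h3 : q.1 + (dirv p.2 + dirv q.2) = q.1 + 0 := by
      calc q.1 + (dirv p.2 + dirv q.2) = (q.1 + dirv q.2) + dirv p.2 := by ring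
        _ = p.1 + dirv p.2 := by rw [← h1]
        _ = q.1 + 0 := by rw [h2, add_zero]
    exact add_left_cancel h3

lemma EdP_ne {p q : Pt × Fin 4} (h : p ≠ q) : EdP p ≠ EdP q := fun he => h (EdP_inj he)

lemma shares_symm {e1 e2 : Sym2 Pt} (h : SharesEndpoint e1 e2) : SharesEndpoint e2 e1 := by
  obtain ⟨v, h1, h2⟩ := h
  exact ⟨v, h2, h1⟩

/-- Two edges are far: every pair of endpoints is at Chebyshev distance at least 2. -/
def FarP (p q : Pt × Fin 4) : Prop :=
  ∀ x ∈ EdP p, ∀ y ∈ EdP q, 2 ≤ max |x.1 - y.1| |x.2 - y.2|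

lemma labels_ne {f : Sym2 Pt → ℕ} (hf : IsL12 f) {p q : Pt × Fin 4} (hpq : p ≠ q)
    (hs : SharesEndpoint (EdP p) (EdP q)) : f (EdP p) ≠ f (EdP q) :=
  hf.1 (EdP p) (EdP_mem_edgeSet p) (EdP q) (EdP_mem_edgeSet q) ⟨EdP_ne hpq, hs⟩

lemma share_or_far {f : Sym2 Pt → ℕ} (hf : IsL12 f) {p q : Pt × Fin 4} (hpq : p ≠ q)
    (hl : |(f (EdP p) : ℤ) - (f (EdP q) : ℤ)| ≤ 1) :
    SharesEndpoint (EdP p) (EdP q) ∨ FarP p q := by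
  by_contra hc
  push_neg at hc
  obtain ⟨hs, hfar⟩ := hc
  rw [FarP] at hfar
  push_neg at hfar
  obtain ⟨x, hx, y, hy, hd⟩ := hfar
  have hxy : x ≠ y := fun h => hs ⟨x, hx, h ▸ hy⟩
  have hadj : T8.Adj x y := by
    refine ⟨hxy, ?_⟩
    have hlt := max_lt_iff.mp hd
    have h0 : 0 ≤ |x.1 - y.1| := abs_nonneg _
    have h0' : 0 ≤ |x.2 - y.2| := abs_nonneg _
    have hne : |x.1 - y.1| ≠ 0 ∨ |x.2 - y.2| ≠ 0 := by
      by_contra hz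
      push_neg at hz
      apply hxy
      have e1 : x.1 = y.1 := by have := abs_eq_zero.mp hz.1; linarith
      have e2 : x.2 = y.2 := by have := abs_eq_zero.mp hz.2; linarith
      exact Prod.ext_iff.mpr ⟨e1, e2⟩
    rcases hne with h | h
    · have : |x.1 - y.1| = 1 := by omega
      have : max |x.1 - y.1| |x.2 - y.2| ≤ 1 := max_le (by omega) (by omega)
      omega
    · have : max |x.1 - y.1| |x.2 - y.2| ≤ 1 := max_le (by omega) (by omega)
      omega
  have hd2 : EdgeDist2 (EdP p) (EdP q) :=
    ⟨EdP_ne hpq, hs, s(x, y), (SimpleGraph.mem_edgeSet T8).mpr hadj,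
      ⟨x, hx, Sym2.mem_iff.mpr (Or.inl rfl)⟩, ⟨y, Sym2.mem_iff.mpr (Or.inr rfl), hy⟩⟩
  have h2 := hf.2 (EdP p) (EdP_mem_edgeSet p) (EdP q) (EdP_mem_edgeSet q) hd2
  have : (2 : ℤ) ≤ 1 := le_trans h2 hl
  norm_num at this

lemma partner_unique {f : Sym2 Pt → ℕ} (hf : IsL12 f) {p q r : Pt × Fin 4}
    (hq : q ≠ p) (hr : r ≠ p)
    (hgq : f (EdP q) / 2 = f (EdP p) / 2) (hgr : f (EdP r) / 2 = f (EdP p) / 2)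
    (hsq : SharesEndpoint (EdP p) (EdP q)) (hsr : SharesEndpoint (EdP p) (EdP r)) :
    q = r := by
  by_contra hqr
  have h1 : f (EdP q) ≠ f (EdP p) := labels_ne hf hq (shares_symm hsq)
  have h2 : f (EdP r) ≠ f (EdP p) := labels_ne hf hr (shares_symm hsr)
  have heq : f (EdP q) = f (EdP r) := by omega
  rcases Classical.em (SharesEndpoint (EdP q) (EdP r)) with hs | hs
  · exact labels_ne hf hqr hs heq
  · obtain ⟨x, hxp, hxq⟩ := hsq
    obtain ⟨y, hyp, hyr⟩ := hsr
    have hd2 : EdgeDist2 (EdP q) (EdP r) :=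
      ⟨EdP_ne hqr, hs, EdP p, EdP_mem_edgeSet p, ⟨x, hxq, hxp⟩, ⟨y, hyp, hyr⟩⟩
    have h3 := hf.2 (EdP q) (EdP_mem_edgeSet q) (EdP r) (EdP_mem_edgeSet r) hd2
    rw [heq] at h3
    simp at h3

/-! ### Territories -/

def Q4 : Finset Pt := {((1:ℤ), (1:ℤ)), (1, 2), (2, 1), (2, 2)}

def vset (i : Fin 4) : Finset Pt := {0, dirv i}

def tauOff (i : Fin 4) : Finset Pt := (vset i).biUnion (fun a => Q4.image (a + ·))

def tauP (p : Pt × Fin 4) : Finset Pt := (tauOff p.2).image (p.1 + ·)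

def assocL (l : List (Pt × Finset Pt)) (Δ : Pt) (d : Finset Pt) : Finset Pt :=
  match l with
  | [] => d
  | e :: t => if Δ = e.1 then e.2 else assocL t Δ d

lemma assocL_cases (l : List (Pt × Finset Pt)) (Δ : Pt) (d : Finset Pt) :
    assocL l Δ d = d ∨ (Δ, assocL l Δ d) ∈ l := by
  induction l with
  | nil => exact Or.inl rfl
  | cons e t ih =>
    rw [assocL]
    split_ifs with h
    · right
      rw [h]
      simp
    · rcases ih with h' | h'
      · exact Or.inl h'
      · exact Or.inr (List.mem_cons_of_mem _ h')
def tblList : Fin 4 → Fin 4 → List (Pt × Finset Pt)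
  | 0, 0 => [(((-1:ℤ),(0:ℤ)), ({((3:ℤ),(1:ℤ)), ((3:ℤ),(2:ℤ)), ((1:ℤ),(1:ℤ)), ((1:ℤ),(2:ℤ))} : Finset Pt)), (((1:ℤ),(0:ℤ)), ({((1:ℤ),(1:ℤ)), ((1:ℤ),(2:ℤ)), ((3:ℤ),(1:ℤ)), ((3:ℤ),(2:ℤ))} : Finset Pt))]
  | 0, 1 => [(((0:ℤ),(-1:ℤ)), ({((3:ℤ),(1:ℤ)), ((3:ℤ),(2:ℤ)), ((1:ℤ),(1:ℤ)), ((1:ℤ),(2:ℤ))} : Finset Pt)), (((0:ℤ),(0:ℤ)), ({((3:ℤ),(1:ℤ)), ((3:ℤ),(2:ℤ)), ((1:ℤ),(1:ℤ)), ((1:ℤ),(2:ℤ))} : Finset Pt)), (((1:ℤ),(-1:ℤ)), ({((1:ℤ),(1:ℤ)), ((1:ℤ),(2:ℤ)), ((2:ℤ),(1:ℤ)), ((2:ℤ),(2:ℤ))} : Finset Pt)), (((1:ℤ),(0:ℤ)), ({((1:ℤ),(1:ℤ)), ((1:ℤ),(2:ℤ)), ((2:ℤ),(1:ℤ)), ((2:ℤ),(2:ℤ))}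 : Finset Pt))]
  | 0, 2 => [(((-1:ℤ),(-1:ℤ)), ({((3:ℤ),(1:ℤ)), ((3:ℤ),(2:ℤ)), ((1:ℤ),(1:ℤ)), ((1:ℤ),(2:ℤ))} : Finset Pt)), (((0:ℤ),(-1:ℤ)), ({((1:ℤ),(2:ℤ)), ((1:ℤ),(1:ℤ)), ((2:ℤ),(1:ℤ)), ((2:ℤ),(2:ℤ))} : Finset Pt)), (((0:ℤ),(0:ℤ)), ({((3:ℤ),(1:ℤ)), ((1:ℤ),(1:ℤ)), ((1:ℤ),(2:ℤ)), ((2:ℤ),(1:ℤ))} : Finset Pt)), (((1:ℤ),(0:ℤ)), ({((1:ℤ),(1:ℤ)), ((1:ℤ),(2:ℤ)), ((2:ℤ),(1:ℤ)), ((2:ℤ),(2:ℤ))} : Finset Pt))]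
  | 0, 3 => [(((-1:ℤ),(1:ℤ)), ({((3:ℤ),(1:ℤ)), ((3:ℤ),(2:ℤ)), ((1:ℤ),(1:ℤ)), ((1:ℤ),(2:ℤ))} : Finset Pt)), (((0:ℤ),(0:ℤ)), ({((3:ℤ),(2:ℤ)), ((1:ℤ),(1:ℤ)), ((1:ℤ),(2:ℤ)), ((2:ℤ),(1:ℤ))} : Finset Pt)), (((0:ℤ),(1:ℤ)), ({((1:ℤ),(1:ℤ)), ((1:ℤ),(2:ℤ)), ((2:ℤ),(1:ℤ)), ((2:ℤ),(2:ℤ))} : Finset Pt)), (((1:ℤ),(0:ℤ)), ({((1:ℤ),(1:ℤ)), ((1:ℤ),(2:ℤ)), ((2:ℤ),(1:ℤ)), ((2:ℤ),(2:ℤ))} : Finset Pt))]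
  | 1, 0 => [(((-1:ℤ),(0:ℤ)), ({((1:ℤ),(3:ℤ)), ((2:ℤ),(1:ℤ)), ((2:ℤ),(2:ℤ)), ((2:ℤ),(3:ℤ))} : Finset Pt)), (((-1:ℤ),(1:ℤ)), ({((1:ℤ),(1:ℤ)), ((2:ℤ),(1:ℤ)), ((2:ℤ),(2:ℤ)), ((2:ℤ),(3:ℤ))} : Finset Pt)), (((0:ℤ),(0:ℤ)), ({((1:ℤ),(3:ℤ)), ((2:ℤ),(1:ℤ)), ((2:ℤ),(2:ℤ)), ((2:ℤ),(3:ℤ))} : Finset Pt)), (((0:ℤ),(1:ℤ)), ({((1:ℤ),(1:ℤ)), ((2:ℤ),(1:ℤ)), ((2:ℤ),(2:ℤ)), ((2:ℤ),(3:ℤ))} : Finset Pt))]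
  | 1, 1 => [(((0:ℤ),(-1:ℤ)), ({((1:ℤ),(3:ℤ)), ((2:ℤ),(3:ℤ)), ((1:ℤ),(1:ℤ)), ((1:ℤ),(2:ℤ))} : Finset Pt)), (((0:ℤ),(1:ℤ)), ({((1:ℤ),(1:ℤ)), ((2:ℤ),(1:ℤ)), ((2:ℤ),(2:ℤ)), ((2:ℤ),(3:ℤ))} : Finset Pt))]
  | 1, 2 => [(((-1:ℤ),(-1:ℤ)), ({((1:ℤ),(3:ℤ)), ((2:ℤ),(3:ℤ)), ((1:ℤ),(1:ℤ)), ((1:ℤ),(2:ℤ))} : Finset Pt)), (((-1:ℤ),(0:ℤ)), ({((2:ℤ),(1:ℤ)), ((1:ℤ),(1:ℤ)), ((1:ℤ),(2:ℤ)), ((1:ℤ),(3:ℤ))} : Finset Pt)), (((0:ℤ),(0:ℤ)), ({((1:ℤ),(3:ℤ)), ((1:ℤ),(1:ℤ)), ((1:ℤ),(2:ℤ)), ((2:ℤ),(1:ℤ))} : Finset Pt)), (((0:ℤ),(1:ℤ)), ({((1:ℤ),(1:ℤ)), ((2:ℤ),(1:ℤ)), ((1:ℤ),(2:ℤ)), ((1:ℤ),(3:ℤ))}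 : Finset Pt))]
  | 1, 3 => [(((-1:ℤ),(1:ℤ)), ({((2:ℤ),(3:ℤ)), ((1:ℤ),(1:ℤ)), ((1:ℤ),(2:ℤ)), ((1:ℤ),(3:ℤ))} : Finset Pt)), (((-1:ℤ),(2:ℤ)), ({((1:ℤ),(1:ℤ)), ((2:ℤ),(1:ℤ)), ((1:ℤ),(2:ℤ)), ((1:ℤ),(3:ℤ))} : Finset Pt)), (((0:ℤ),(0:ℤ)), ({((1:ℤ),(3:ℤ)), ((2:ℤ),(3:ℤ)), ((1:ℤ),(1:ℤ)), ((1:ℤ),(2:ℤ))} : Finset Pt)), (((0:ℤ),(1:ℤ)), ({((1:ℤ),(1:ℤ)), ((1:ℤ),(2:ℤ)), ((1:ℤ),(3:ℤ)), ((2:ℤ),(1:ℤ))} : Finset Pt))]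
  | 2, 0 => [(((-1:ℤ),(0:ℤ)), ({((2:ℤ),(1:ℤ)), ((2:ℤ),(2:ℤ)), ((2:ℤ),(3:ℤ)), ((3:ℤ),(2:ℤ))} : Finset Pt)), (((0:ℤ),(0:ℤ)), ({((2:ℤ),(2:ℤ)), ((2:ℤ),(3:ℤ)), ((3:ℤ),(2:ℤ)), ((3:ℤ),(3:ℤ))} : Finset Pt)), (((0:ℤ),(1:ℤ)), ({((1:ℤ),(1:ℤ)), ((2:ℤ),(1:ℤ)), ((3:ℤ),(2:ℤ)), ((3:ℤ),(3:ℤ))} : Finset Pt)), (((1:ℤ),(1:ℤ)), ({((1:ℤ),(1:ℤ)), ((1:ℤ),(2:ℤ)), ((2:ℤ),(1:ℤ)), ((3:ℤ),(2:ℤ))} : Finset Pt))]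
  | 2, 1 => [(((0:ℤ),(-1:ℤ)), ({((2:ℤ),(1:ℤ)), ((2:ℤ),(2:ℤ)), ((2:ℤ),(3:ℤ)), ((3:ℤ),(2:ℤ))} : Finset Pt)), (((0:ℤ),(0:ℤ)), ({((2:ℤ),(2:ℤ)), ((2:ℤ),(3:ℤ)), ((3:ℤ),(2:ℤ)), ((3:ℤ),(3:ℤ))} : Finset Pt)), (((1:ℤ),(0:ℤ)), ({((1:ℤ),(1:ℤ)), ((1:ℤ),(2:ℤ)), ((3:ℤ),(2:ℤ)), ((3:ℤ),(3:ℤ))} : Finset Pt)), (((1:ℤ),(1:ℤ)), ({((1:ℤ),(1:ℤ)), ((1:ℤ),(2:ℤ)), ((2:ℤ),(1:ℤ)), ((3:ℤ),(2:ℤ))} : Finset Pt))]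
  | 2, 2 => [(((-1:ℤ),(-1:ℤ)), ({((2:ℤ),(3:ℤ)), ((3:ℤ),(2:ℤ)), ((3:ℤ),(3:ℤ)), ((1:ℤ),(1:ℤ))} : Finset Pt)), (((1:ℤ),(1:ℤ)), ({((1:ℤ),(1:ℤ)), ((1:ℤ),(2:ℤ)), ((2:ℤ),(1:ℤ)), ((2:ℤ),(3:ℤ))} : Finset Pt))]
  | 2, 3 => [(((-1:ℤ),(1:ℤ)), ({((2:ℤ),(3:ℤ)), ((3:ℤ),(2:ℤ)), ((3:ℤ),(3:ℤ)), ((1:ℤ),(1:ℤ))} : Finset Pt)), (((0:ℤ),(0:ℤ)), ({((2:ℤ),(3:ℤ)), ((3:ℤ),(2:ℤ)), ((3:ℤ),(3:ℤ)), ((1:ℤ),(1:ℤ))} : Finset Pt)), (((0:ℤ),(2:ℤ)), ({((1:ℤ),(1:ℤ)), ((1:ℤ),(2:ℤ)), ((2:ℤ),(1:ℤ)), ((2:ℤ),(2:ℤ))} : Finset Pt)), (((1:ℤ),(1:ℤ)), ({((1:ℤ),(1:ℤ)), ((1:ℤ),(2:ℤ)), ((2:ℤ),(1:ℤ)), ((2:ℤ),(2:ℤ))}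 : Finset Pt))]
  | 3, 0 => [(((-1:ℤ),(0:ℤ)), ({((2:ℤ),(0:ℤ)), ((2:ℤ),(1:ℤ)), ((2:ℤ),(2:ℤ)), ((3:ℤ),(0:ℤ))} : Finset Pt)), (((0:ℤ),(-1:ℤ)), ({((1:ℤ),(2:ℤ)), ((2:ℤ),(2:ℤ)), ((3:ℤ),(0:ℤ)), ((3:ℤ),(1:ℤ))} : Finset Pt)), (((0:ℤ),(0:ℤ)), ({((2:ℤ),(0:ℤ)), ((2:ℤ),(2:ℤ)), ((3:ℤ),(0:ℤ)), ((3:ℤ),(1:ℤ))} : Finset Pt)), (((1:ℤ),(-1:ℤ)), ({((1:ℤ),(1:ℤ)), ((1:ℤ),(2:ℤ)), ((2:ℤ),(2:ℤ)), ((3:ℤ),(0:ℤ))} : Finset Pt))]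
  | 3, 1 => [(((0:ℤ),(-1:ℤ)), ({((2:ℤ),(1:ℤ)), ((2:ℤ),(2:ℤ)), ((3:ℤ),(0:ℤ)), ((3:ℤ),(1:ℤ))} : Finset Pt)), (((0:ℤ),(0:ℤ)), ({((2:ℤ),(0:ℤ)), ((2:ℤ),(1:ℤ)), ((2:ℤ),(2:ℤ)), ((3:ℤ),(0:ℤ))} : Finset Pt)), (((1:ℤ),(-2:ℤ)), ({((1:ℤ),(1:ℤ)), ((1:ℤ),(2:ℤ)), ((2:ℤ),(2:ℤ)), ((3:ℤ),(0:ℤ))} : Finset Pt)), (((1:ℤ),(-1:ℤ)), ({((1:ℤ),(1:ℤ)), ((1:ℤ),(2:ℤ)), ((3:ℤ),(0:ℤ)), ((3:ℤ),(1:ℤ))} : Finset Pt))]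
  | 3, 2 => [(((-1:ℤ),(-1:ℤ)), ({((1:ℤ),(2:ℤ)), ((2:ℤ),(0:ℤ)), ((2:ℤ),(1:ℤ)), ((2:ℤ),(2:ℤ))} : Finset Pt)), (((0:ℤ),(-2:ℤ)), ({((1:ℤ),(1:ℤ)), ((1:ℤ),(2:ℤ)), ((2:ℤ),(1:ℤ)), ((2:ℤ),(2:ℤ))} : Finset Pt)), (((0:ℤ),(0:ℤ)), ({((1:ℤ),(2:ℤ)), ((2:ℤ),(0:ℤ)), ((2:ℤ),(1:ℤ)), ((2:ℤ),(2:ℤ))} : Finset Pt)), (((1:ℤ),(-1:ℤ)), ({((1:ℤ),(1:ℤ)), ((1:ℤ),(2:ℤ)), ((2:ℤ),(1:ℤ)), ((2:ℤ),(2:ℤ))} : Finset Pt))]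
  | 3, 3 => [(((-1:ℤ),(1:ℤ)), ({((2:ℤ),(0:ℤ)), ((3:ℤ),(0:ℤ)), ((3:ℤ),(1:ℤ)), ((1:ℤ),(1:ℤ))} : Finset Pt)), (((1:ℤ),(-1:ℤ)), ({((1:ℤ),(1:ℤ)), ((1:ℤ),(2:ℤ)), ((2:ℤ),(1:ℤ)), ((2:ℤ),(2:ℤ))} : Finset Pt))]

def TBL1 : Fin 4 → Finset Pt
  | 0 => {((1:ℤ),(1:ℤ)), ((1:ℤ),(2:ℤ)), ((2:ℤ),(1:ℤ)), ((2:ℤ),(2:ℤ))}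
  | 1 => {((1:ℤ),(1:ℤ)), ((1:ℤ),(2:ℤ)), ((1:ℤ),(3:ℤ)), ((2:ℤ),(1:ℤ))}
  | 2 => {((1:ℤ),(1:ℤ)), ((1:ℤ),(2:ℤ)), ((2:ℤ),(1:ℤ)), ((2:ℤ),(2:ℤ))}
  | 3 => {((1:ℤ),(1:ℤ)), ((1:ℤ),(2:ℤ)), ((2:ℤ),(0:ℤ)), ((2:ℤ),(1:ℤ))}

def TBL (i j : Fin 4) (Δ : Pt) : Finset Pt := assocL (tblList i j) Δ (TBL1 i)

lemma TBL1_subset (i : Fin 4) : TBL1 i ⊆ tauOff i := by fin_cases i <;> decide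

lemma TBL1_card (i : Fin 4) : (TBL1 i).card = 4 := by fin_cases i <;> decide

lemma tblList_subset : ∀ i j : Fin 4, ∀ e ∈ tblList i j, e.2 ⊆ tauOff i := by decide

lemma tblList_card : ∀ i j : Fin 4, ∀ e ∈ tblList i j, e.2.card = 4 := by decide

lemma TBL_subset (i j : Fin 4) (Δ : Pt) : TBL i j Δ ⊆ tauOff i := by
  rcases assocL_cases (tblList i j) Δ (TBL1 i) with h | h
  · rw [TBL, h]; exact TBL1_subset i
  · exact tblList_subset i j _ h

lemma TBL_card (i j : Fin 4) (Δ : Pt) : (TBL i j Δ).card = 4 := by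
  rcases assocL_cases (tblList i j) Δ (TBL1 i) with h | h
  · rw [TBL, h]; exact TBL1_card i
  · exact tblList_card i j _ h

lemma TBL_pair_disjoint : ∀ i j : Fin 4,
    ∀ Δ ∈ [(0 : Pt), -dirv j, dirv i, dirv i - dirv j],
      ¬(Δ = 0 ∧ i = j) →
      TBL i j Δ ∩ (TBL j i (-Δ)).image (Δ + ·) = ∅ := by decide

lemma Q4_diff : ∀ u ∈ Q4, ∀ w ∈ Q4, |w.1 - u.1| ≤ 1 ∧ |w.2 - u.2| ≤ 1 := by decide

lemma tauOff_bounds : ∀ i : Fin 4, ∀ c ∈ tauOff i, 1 ≤ c.1 ∧ c.1 ≤ 3 ∧ 0 ≤ c.2 ∧ c.2 ≤ 3 := by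
  decide

lemma far_tau_disjoint {p q : Pt × Fin 4} (h : FarP p q) : Disjoint (tauP p) (tauP q) := by
  rw [Finset.disjoint_left]
  intro c hcp hcq
  rw [tauP, Finset.mem_image] at hcp hcq
  obtain ⟨op, hop, hcp'⟩ := hcp
  obtain ⟨oq, hoq, hcq'⟩ := hcq
  rw [tauOff, Finset.mem_biUnion] at hop hoq
  obtain ⟨ap, hap, hop'⟩ := hop
  obtain ⟨aq, haq, hoq'⟩ := hoq
  rw [Finset.mem_image] at hop' hoq'
  obtain ⟨up, hup, hop''⟩ := hop'
  obtain ⟨uq, huq, hoq''⟩ := hoq'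
  have hx : p.1 + ap ∈ EdP p := by
    rw [vset, Finset.mem_insert, Finset.mem_singleton] at hap
    rcases hap with h' | h'
    · rw [h', add_zero]; exact mem_EdP.mpr (Or.inl rfl)
    · rw [h']; exact mem_EdP.mpr (Or.inr rfl)
  have hy : q.1 + aq ∈ EdP q := by
    rw [vset, Finset.mem_insert, Finset.mem_singleton] at haq
    rcases haq with h' | h'
    · rw [h', add_zero]; exact mem_EdP.mpr (Or.inl rfl)
    · rw [h']; exact mem_EdP.mpr (Or.inr rfl)
  have hfar := h _ hx _ hy
  have hceq : p.1 + (ap + up) = q.1 + (aq + uq) := by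
    rw [← hop''] at hcp'
    rw [← hoq''] at hcq'
    exact hcp'.trans hcq'.symm
  have he1 : p.1.1 + ap.1 + up.1 = q.1.1 + aq.1 + uq.1 := by
    have := congrArg Prod.fst hceq
    simp [Prod.fst_add] at this
    linarith
  have he2 : p.1.2 + ap.2 + up.2 = q.1.2 + aq.2 + uq.2 := by
    have := congrArg Prod.snd hceq
    simp [Prod.snd_add] at this
    linarith
  have hq4 := Q4_diff up hup uq huq
  have hc1 : (p.1 + ap).1 - (q.1 + aq).1 = uq.1 - up.1 := by
    simp [Prod.fst_add]
    linarith
  have hc2 : (p.1 + ap).2 - (q.1 + aq).2 = uq.2 - up.2 := by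
    simp [Prod.snd_add]
    linarith
  rw [hc1, hc2] at hfar
  have := max_le hq4.1 hq4.2
  omega

/-! ### The per-edge 4-cell territory assignment -/

open Classical in
noncomputable def sigP (f : Sym2 Pt → ℕ) (p : Pt × Fin 4) : Finset Pt :=
  if h : ∃ q, q ≠ p ∧ f (EdP q) / 2 = f (EdP p) / 2 ∧ SharesEndpoint (EdP p) (EdP q) then
    (TBL p.2 h.choose.2 (h.choose.1 - p.1)).image (p.1 + ·)
  else (TBL1 p.2).image (p.1 + ·)

lemma sigP_card (f : Sym2 Pt → ℕ) (p : Pt × Fin 4) : (sigP f p).card = 4 := by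
  rw [sigP]
  split_ifs with h
  · rw [Finset.card_image_of_injective _ (add_right_injective p.1), TBL_card]
  · rw [Finset.card_image_of_injective _ (add_right_injective p.1), TBL1_card]

lemma sigP_subset_tau (f : Sym2 Pt → ℕ) (p : Pt × Fin 4) : sigP f p ⊆ tauP p := by
  rw [sigP]
  split_ifs with h
  · exact Finset.image_subset_image (TBL_subset _ _ _)
  · exact Finset.image_subset_image (TBL1_subset _)

lemma share_delta {p q : Pt × Fin 4} (hs : SharesEndpoint (EdP p) (EdP q)) :
    q.1 - p.1 ∈ [(0 : Pt), -dirv q.2, dirv p.2, dirv p.2 - dirv q.2] := by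
  obtain ⟨x, hxp, hxq⟩ := hs
  rcases mem_EdP.mp hxp with h1 | h1 <;> rcases mem_EdP.mp hxq with h2 | h2
  · have h3 : q.1 - p.1 = 0 := by linear_combination h1 - h2
    simp [h3]
  · have h3 : q.1 - p.1 = -dirv q.2 := by linear_combination h1 - h2
    simp [h3]
  · have h3 : q.1 - p.1 = dirv p.2 := by linear_combination h1 - h2
    simp [h3]
  · have h3 : q.1 - p.1 = dirv p.2 - dirv q.2 := by linear_combination h1 - h2
    simp [h3]

lemma sigP_disjoint {f : Sym2 Pt → ℕ} (hf : IsL12 f) {p q : Pt × Fin 4} (hpq : p ≠ q)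
    (hg : f (EdP q) / 2 = f (EdP p) / 2) : Disjoint (sigP f p) (sigP f q) := by
  rcases Classical.em (SharesEndpoint (EdP p) (EdP q)) with hs | hs
  · have hex_p : ∃ r, r ≠ p ∧ f (EdP r) / 2 = f (EdP p) / 2 ∧ SharesEndpoint (EdP p) (EdP r) :=
      ⟨q, hpq.symm, hg, hs⟩
    have hex_q : ∃ r, r ≠ q ∧ f (EdP r) / 2 = f (EdP q) / 2 ∧ SharesEndpoint (EdP q) (EdP r) :=
      ⟨p, hpq, by rw [hg], shares_symm hs⟩
    have hcp : hex_p.choose = q :=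
      partner_unique hf hex_p.choose_spec.1 hpq.symm hex_p.choose_spec.2.1 hg
        hex_p.choose_spec.2.2 hs
    have hcq : hex_q.choose = p :=
      partner_unique hf hex_q.choose_spec.1 hpq hex_q.choose_spec.2.1 (by rw [hg])
        hex_q.choose_spec.2.2 (shares_symm hs)
    rw [sigP, sigP, dif_pos hex_p, dif_pos hex_q, hcp, hcq]
    have hne : ¬(q.1 - p.1 = 0 ∧ p.2 = q.2) := by
      rintro ⟨h0, h2⟩
      exact hpq (Prod.ext_iff.mpr ⟨(sub_eq_zero.mp h0).symm, h2⟩)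
    have hkey := TBL_pair_disjoint p.2 q.2 (q.1 - p.1) (share_delta hs) hne
    rw [Finset.disjoint_left]
    intro c hc1 hc2
    rw [Finset.mem_image] at hc1 hc2
    obtain ⟨t1, ht1, hc1'⟩ := hc1
    obtain ⟨t2, ht2, hc2'⟩ := hc2
    have hneg : p.1 - q.1 = -(q.1 - p.1) := by ring
    rw [hneg] at ht2
    have ht1' : t1 = (q.1 - p.1) + t2 := by
      have h5 : p.1 + t1 = q.1 + t2 := hc1'.trans hc2'.symm
      calc t1 = -p.1 + (p.1 + t1) := by ring
        _ = -p.1 + (q.1 + t2) := by rw [h5]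
        _ = (q.1 - p.1) + t2 := by ring
    have hmem : t1 ∈ TBL p.2 q.2 (q.1 - p.1) ∩
        (TBL q.2 p.2 (-(q.1 - p.1))).image ((q.1 - p.1) + ·) :=
      Finset.mem_inter.mpr ⟨ht1, Finset.mem_image.mpr ⟨t2, ht2, ht1'.symm⟩⟩
    rw [hkey] at hmem
    exact absurd hmem (Finset.notMem_empty _)
  · have hfar : FarP p q := by
      have hl : |(f (EdP p) : ℤ) - (f (EdP q) : ℤ)| ≤ 1 := by
        rw [abs_le]
        omega
      rcases share_or_far hf hpq hl with h | h
      · exact absurd h hs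
      · exact h
    exact Finset.disjoint_of_subset_left (sigP_subset_tau f p)
      (Finset.disjoint_of_subset_right (sigP_subset_tau f q) (far_tau_disjoint hfar))

end NoL12Aux

set_option linter.constructorNameAsVariable false in
set_option maxRecDepth 4000 in
/-- There is no `L(1,2)`-edge labeling of `T8` with labels in
`{0, …, 26}`, i.e. the span is at least `27`. -/
theorem no_L12_labeling_26 : ¬ ∃ f : Sym2 (ℤ × ℤ) → ℕ, IsL12Bounded 26 f := by
  rintro ⟨f, hf, hbd⟩
  have hWcard : ((Finset.Ico (0:ℤ) 100 ×ˢ Finset.Ico (0:ℤ) 100) ×ˢ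
      (Finset.univ : Finset (Fin 4))).card = 40000 := by
    rw [Finset.card_product, Finset.card_product, Int.card_Ico, Finset.card_univ,
      Fintype.card_fin]
    rfl
  have hkey : ∀ p ∈ (Finset.Ico (0:ℤ) 100 ×ˢ Finset.Ico (0:ℤ) 100) ×ˢ
      (Finset.univ : Finset (Fin 4)), f (NoL12Aux.EdP p) / 2 ∈ Finset.range 14 := by
    intro p _
    have h1 := hbd (NoL12Aux.EdP p) (NoL12Aux.EdP_mem_edgeSet p)
    rw [Finset.mem_range]
    omega
  have hsum := Finset.card_eq_sum_card_fiberwise hkey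
  have hfib : ∀ k : ℕ,
      (((Finset.Ico (0:ℤ) 100 ×ˢ Finset.Ico (0:ℤ) 100) ×ˢ
        (Finset.univ : Finset (Fin 4))).filter
          (fun p => f (NoL12Aux.EdP p) / 2 = k)).card ≤ 2704 := by
    intro k
    have hdisj : ∀ p ∈ ((Finset.Ico (0:ℤ) 100 ×ˢ Finset.Ico (0:ℤ) 100) ×ˢ
        (Finset.univ : Finset (Fin 4))).filter (fun p => f (NoL12Aux.EdP p) / 2 = k),
        ∀ q ∈ ((Finset.Ico (0:ℤ) 100 ×ˢ Finset.Ico (0:ℤ) 100) ×ˢ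
        (Finset.univ : Finset (Fin 4))).filter (fun p => f (NoL12Aux.EdP p) / 2 = k),
        p ≠ q → Disjoint (NoL12Aux.sigP f p) (NoL12Aux.sigP f q) := by
      intro p hp q hq hpq
      simp only [Finset.mem_filter] at hp hq
      exact NoL12Aux.sigP_disjoint hf hpq (by rw [hq.2, hp.2])
    have hcard := Finset.card_biUnion hdisj
    have hsub : (((Finset.Ico (0:ℤ) 100 ×ˢ Finset.Ico (0:ℤ) 100) ×ˢ
        (Finset.univ : Finset (Fin 4))).filter
          (fun p => f (NoL12Aux.EdP p) / 2 = k)).biUnion (NoL12Aux.sigP f) ⊆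
        Finset.Ico (0 : ℤ) 104 ×ˢ Finset.Ico (0 : ℤ) 104 := by
      intro c hc
      simp only [Finset.mem_biUnion, Finset.mem_filter, Finset.mem_product,
        Finset.mem_Ico] at hc
      obtain ⟨p, ⟨⟨⟨⟨ha1, ha2⟩, hb1, hb2⟩, -⟩, -⟩, hcp⟩ := hc
      have hct := NoL12Aux.sigP_subset_tau f p hcp
      rw [NoL12Aux.tauP, Finset.mem_image] at hct
      obtain ⟨o, ho, hco⟩ := hct
      have hob := NoL12Aux.tauOff_bounds p.2 o ho
      simp only [Finset.mem_product, Finset.mem_Ico]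
      have hc1 : c.1 = p.1.1 + o.1 := by rw [← hco]; simp [Prod.fst_add]
      have hc2 : c.2 = p.1.2 + o.2 := by rw [← hco]; simp [Prod.snd_add]
      rw [hc1, hc2]
      obtain ⟨ho1, ho2, ho3, ho4⟩ := hob
      exact ⟨⟨by linarith, by linarith⟩, by linarith, by linarith⟩
    have hle := Finset.card_le_card hsub
    rw [hcard] at hle
    have hsc : ∑ p ∈ (((Finset.Ico (0:ℤ) 100 ×ˢ Finset.Ico (0:ℤ) 100) ×ˢ
        (Finset.univ : Finset (Fin 4))).filter
          (fun p => f (NoL12Aux.EdP p) / 2 = k)), (NoL12Aux.sigP f p).card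
        = 4 * (((Finset.Ico (0:ℤ) 100 ×ˢ Finset.Ico (0:ℤ) 100) ×ˢ
        (Finset.univ : Finset (Fin 4))).filter
          (fun p => f (NoL12Aux.EdP p) / 2 = k)).card := by
      rw [Finset.sum_congr rfl (fun p _ => NoL12Aux.sigP_card f p), Finset.sum_const,
        smul_eq_mul, mul_comm]
    have hWc : (Finset.Ico (0 : ℤ) 104 ×ˢ Finset.Ico (0 : ℤ) 104).card = 10816 := by
      rw [Finset.card_product, Int.card_Ico]
      rfl
    rw [hsc, hWc] at hle
    omega
  have h2 : ∑ k ∈ Finset.range 14,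
      (((Finset.Ico (0:ℤ) 100 ×ˢ Finset.Ico (0:ℤ) 100) ×ˢ
        (Finset.univ : Finset (Fin 4))).filter
          (fun p => f (NoL12Aux.EdP p) / 2 = k)).card ≤
      ∑ _k ∈ Finset.range 14, 2704 :=
    Finset.sum_le_sum (fun k _ => hfib k)
  rw [Finset.sum_const, Finset.card_range, smul_eq_mul] at h2
  rw [← hsum, hWcard] at h2
  norm_num at h2
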